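/- Let 1 ≤ i < k ≤ n, and let F be a family of k-subsets of [n]. If the i-shadow of F has size at most C(x,i) for some real x > k-1, then |F| ≤ C(x,k), where C(x,j) denotes the generalized binomial coefficient x(x-1)···(x-j+1)/j!. -/

import Mathlib

open Finset
open scoped FinsetFamily

/-- Generalized binomial coefficient `x(x-1)⋯(x-j+1)/j!` for real `x`. -/
noncomputable def genChoose (x : ℝ) (j : ℕ) : ℝ :=
  (∏ t ∈ Finset.range j, (x - t)) / (Nat.factorial j)

/-- The `i`-shadow of a family `F` of subsets of `Fin n`: all `i`-subsets
contained in some member of `F`. -/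
def iShadow (n i : ℕ) (F : Finset (Finset (Fin n))) : Finset (Finset (Fin n)) :=
  (Finset.powersetCard i (Finset.univ : Finset (Fin n))).filter
    (fun G => ∃ A ∈ F, G ⊆ A)

namespace KKAux

lemma fac_pos {x : ℝ} {j : ℕ} (hx : (j : ℝ) - 1 < x) :
    ∀ t ∈ Finset.range j, 0 < x - t := by
  intro t ht
  rw [Finset.mem_range] at ht
  have : (t : ℝ) ≤ (j : ℝ) - 1 := by
    have : (t : ℝ) + 1 ≤ (j : ℝ) := by exact_mod_cast ht
    linarith
  linarith

lemma gc_pos {x : ℝ} {j : ℕ} (hx : (j : ℝ) - 1 < x) : 0 < genChoose x j := by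
  unfold genChoose
  apply div_pos (Finset.prod_pos (fac_pos hx))
  exact_mod_cast Nat.factorial_pos j

lemma gc_le {x y : ℝ} {j : ℕ} (hx : (j : ℝ) - 1 < x) (hxy : x ≤ y) :
    genChoose x j ≤ genChoose y j := by
  unfold genChoose
  have hfac : (0:ℝ) < Nat.factorial j := by exact_mod_cast Nat.factorial_pos j
  apply div_le_div_of_nonneg_right ?_ hfac.le
  exact Finset.prod_le_prod (fun t ht => (fac_pos hx t ht).le)
      (fun t ht => by linarith)

lemma gc_lt {x y : ℝ} {j : ℕ} (hj : 1 ≤ j) (hx : (j : ℝ) - 1 < x) (hxy : x < y) :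
    genChoose x j < genChoose y j := by
  unfold genChoose
  have hfac : (0:ℝ) < Nat.factorial j := by exact_mod_cast Nat.factorial_pos j
  apply div_lt_div_of_pos_right ?_ hfac
  exact Finset.prod_lt_prod_of_nonempty (fac_pos hx)
    (fun t ht => by linarith) (Finset.nonempty_range_iff.2 (by omega))

lemma gc_pascal (x : ℝ) (m : ℕ) :
    genChoose x (m + 1) = genChoose (x - 1) (m + 1) + genChoose (x - 1) m := by
  unfold genChoose
  have h1 : ∏ t ∈ Finset.range (m + 1), (x - t)
      = (∏ t ∈ Finset.range m, (x - 1 - t)) * x := by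
    rw [Finset.prod_range_succ']
    congr 1
    · apply Finset.prod_congr rfl
      intro t _
      push_cast
      ring
    · simp
  have h2 : ∏ t ∈ Finset.range (m + 1), (x - 1 - t)
      = (∏ t ∈ Finset.range m, (x - 1 - t)) * (x - 1 - m) := Finset.prod_range_succ _ _
  have h3 : (Nat.factorial (m + 1) : ℝ) = (m + 1) * Nat.factorial m := by
    rw [Nat.factorial_succ]; push_cast; ring
  rw [h1, h2, h3]
  have hm : (Nat.factorial m : ℝ) ≠ 0 := by exact_mod_cast (Nat.factorial_pos m).ne'
  have hm1 : ((m : ℝ) + 1) ≠ 0 := by positivity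
  field_simp
  ring



lemma prod_desc (j : ℕ) : ∀ a : ℕ, a ≤ j →
    (∏ t ∈ Finset.range a, ((j : ℝ) - t)) * (Nat.factorial (j - a)) = Nat.factorial j := by
  intro a
  induction a with
  | zero => simp
  | succ a ih =>
    intro h
    have ha : a ≤ j := by omega
    have hsub : j - a = (j - (a + 1)) + 1 := by omega
    have := ih ha
    rw [Finset.prod_range_succ]
    have hfac : (Nat.factorial (j - a) : ℝ)
        = ((j : ℝ) - a) * Nat.factorial (j - (a + 1)) := by
      rw [hsub, Nat.factorial_succ]
      push_cast [Nat.cast_sub (by omega : a + 1 ≤ j)]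
      ring
    have hja : ((j : ℝ) - a) ≠ 0 := by
      have : (a : ℝ) + 1 ≤ j := by exact_mod_cast h
      linarith
    calc (∏ t ∈ Finset.range a, ((j:ℝ) - t)) * ((j:ℝ) - a) * (Nat.factorial (j - (a+1)))
        = (∏ t ∈ Finset.range a, ((j:ℝ) - t)) * (((j:ℝ) - a) * Nat.factorial (j - (a+1))) := by ring
      _ = (∏ t ∈ Finset.range a, ((j:ℝ) - t)) * (Nat.factorial (j - a)) := by rw [hfac]
      _ = Nat.factorial j := this

lemma gc_self (j : ℕ) : genChoose (j : ℝ) j = 1 := by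
  unfold genChoose
  have h := prod_desc j j le_rfl
  simp only [Nat.sub_self, Nat.factorial_zero, Nat.cast_one, mul_one] at h
  rw [h]
  have : (Nat.factorial j : ℝ) ≠ 0 := by exact_mod_cast (Nat.factorial_pos j).ne'
  field_simp

lemma gc_pred (m : ℕ) : genChoose ((m : ℝ) + 2) (m + 1) = (m : ℝ) + 2 := by
  unfold genChoose
  have h := prod_desc (m + 2) (m + 1) (by omega)
  have hsub : (m + 2) - (m + 1) = 1 := by omega
  rw [hsub] at h
  simp only [Nat.factorial_one, Nat.cast_one, mul_one] at h
  have hcast : ∀ t ∈ Finset.range (m+1), ((m:ℝ) + 2 - t) = (((m+2:ℕ)):ℝ) - t := by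
    intro t _; push_cast; ring
  rw [Finset.prod_congr rfl hcast, h]
  have h2 : (Nat.factorial (m + 2) : ℝ) = ((m:ℝ) + 2) * Nat.factorial (m + 1) := by
    rw [Nat.factorial_succ]; push_cast; ring
  have : (Nat.factorial (m+1) : ℝ) ≠ 0 := by exact_mod_cast (Nat.factorial_pos (m+1)).ne'
  rw [h2]
  field_simp



variable {n : ℕ}

/-- A family on `Fin n` whose members use only values `≥ g` and is closed under
replacing an element by any smaller element `≥ g`. -/
def ShiftedAbove (g : ℕ) (F : Finset (Finset (Fin n))) : Prop :=
  (∀ A ∈ F, ∀ a ∈ A, g ≤ a.val) ∧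
  (∀ A ∈ F, ∀ a ∈ A, ∀ b : Fin n, g ≤ b.val → b < a → b ∉ A →
    insert b (A.erase a) ∈ F)

lemma shadow_card_ge {F : Finset (Finset (Fin n))} {A : Finset (Fin n)}
    (hA : A ∈ F) : #A ≤ #(∂ F) := by
  classical
  have hsub : A.image (fun a => A.erase a) ⊆ ∂ F := by
    intro B hB
    rw [Finset.mem_image] at hB
    obtain ⟨a, ha, rfl⟩ := hB
    exact Finset.erase_mem_shadow hA ha
  have hcard : #(A.image (fun a => A.erase a)) = #A := by
    apply Finset.card_image_of_injOn
    intro a ha b hb hab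
    by_contra hne
    have hmem : b ∈ A.erase a := Finset.mem_erase.2 ⟨Ne.symm hne, hb⟩
    simp only [] at hab
    rw [hab] at hmem
    exact Finset.notMem_erase b A hmem
  calc #A = #(A.image (fun a => A.erase a)) := hcard.symm
    _ ≤ #(∂ F) := Finset.card_le_card hsub

lemma shadow_card_ge_two {F : Finset (Finset (Fin n))} {A B : Finset (Fin n)} {j : ℕ}
    (hA : A ∈ F) (hB : B ∈ F) (hne : A ≠ B) (hcA : #A = j) (hcB : #B = j)
    (hj : 2 ≤ j) : j + 1 ≤ #(∂ F) := by
  classical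
  have hBA : (B \ A).Nonempty := by
    rw [Finset.sdiff_nonempty]
    intro hsub
    exact hne (Finset.eq_of_subset_of_card_le hsub (by omega)).symm
  obtain ⟨b, hb⟩ := hBA
  rw [Finset.mem_sdiff] at hb
  have hBe : (B.erase b).Nonempty := by
    rw [← Finset.card_pos, Finset.card_erase_of_mem hb.1]
    omega
  obtain ⟨c, hc⟩ := hBe
  have hcBmem : c ∈ B := Finset.mem_of_mem_erase hc
  have hcb : c ≠ b := Finset.ne_of_mem_erase hc
  have hsub : A.image (fun a => A.erase a) ⊆ ∂ F := by
    intro C hC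
    rw [Finset.mem_image] at hC
    obtain ⟨a, ha, rfl⟩ := hC
    exact Finset.erase_mem_shadow hA ha
  have hcard : #(A.image (fun a => A.erase a)) = j := by
    rw [← hcA]
    apply Finset.card_image_of_injOn
    intro a ha b' hb' hab
    by_contra hne'
    have hmem : b' ∈ A.erase a := Finset.mem_erase.2 ⟨Ne.symm hne', hb'⟩
    simp only [] at hab
    rw [hab] at hmem
    exact Finset.notMem_erase b' A hmem
  have hnotmem : B.erase c ∉ A.image (fun a => A.erase a) := by
    intro hmem
    rw [Finset.mem_image] at hmem
    obtain ⟨a, _, haeq⟩ := hmem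
    have hbmem : b ∈ B.erase c := Finset.mem_erase.2 ⟨Ne.symm hcb, hb.1⟩
    rw [← haeq] at hbmem
    exact hb.2 (Finset.mem_of_mem_erase hbmem)
  have hins : insert (B.erase c) (A.image (fun a => A.erase a)) ⊆ ∂ F := by
    apply Finset.insert_subset _ hsub
    exact Finset.erase_mem_shadow hB hcBmem
  calc j + 1 = #(insert (B.erase c) (A.image (fun a => A.erase a))) := by
        rw [Finset.card_insert_of_notMem hnotmem, hcard]
    _ ≤ #(∂ F) := Finset.card_le_card hins


lemma shifted_main : ∀ N : ℕ, ∀ (m g : ℕ) (F : Finset (Finset (Fin n))) (x : ℝ),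
    (m + 2) + #F ≤ N → ShiftedAbove g F → (∀ A ∈ F, #A = m + 2) →
    ((m : ℝ) + 1) < x → ((#(∂ F) : ℝ)) ≤ genChoose x (m + 1) →
    (#F : ℝ) ≤ genChoose x (m + 2) := by
  classical
  intro N
  induction N with
  | zero => intro m g F x hN; omega
  | succ N ih =>
    intro m g F x hN hshift huni hx hsh
    have hxc : ((m + 2 : ℕ) : ℝ) - 1 < x := by push_cast; linarith
    by_cases hFe : F = ∅
    · rw [hFe]
      simp only [Finset.card_empty, Nat.cast_zero]
      exact (gc_pos hxc).le
    obtain ⟨A₀, hA₀⟩ := Finset.nonempty_iff_ne_empty.2 hFe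
    by_cases hxj : x ≤ (m : ℝ) + 2
    · -- trivial regime
      have hjsh : ((m : ℝ) + 2) ≤ #(∂ F) := by
        have h1 := shadow_card_ge hA₀
        rw [huni A₀ hA₀] at h1
        exact_mod_cast h1
      by_cases hxlt : x < (m : ℝ) + 2
      · exfalso
        have hlt : genChoose x (m + 1) < genChoose ((m : ℝ) + 2) (m + 1) := by
          apply gc_lt (by omega) ?_ hxlt
          push_cast
          linarith
        rw [gc_pred] at hlt
        linarith
      · have hxe : x = (m : ℝ) + 2 := le_antisymm hxj (not_lt.1 hxlt)
        subst hxe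
        have h1 : #F ≤ 1 := by
          by_contra h2
          have h2' : 1 < #F := by omega
          obtain ⟨A, hA, B, hB, hAB⟩ := Finset.one_lt_card.1 h2'
          have h3 := shadow_card_ge_two hA hB hAB (huni _ hA) (huni _ hB) (by omega)
          have h4 : ((m : ℝ) + 2 + 1) ≤ #(∂ F) := by exact_mod_cast h3
          rw [gc_pred] at hsh
          linarith
        have h5 : genChoose ((m : ℝ) + 2) (m + 2) = 1 := by
          have := gc_self (m + 2)
          push_cast at this
          exact this
        rw [h5]
        exact_mod_cast h1
    · push_neg at hxj
      -- the element e = g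
      obtain ⟨a₀, ha₀⟩ := Finset.card_pos.1 (by rw [huni A₀ hA₀]; omega)
      have hgn : g < n := lt_of_le_of_lt (hshift.1 A₀ hA₀ a₀ ha₀) a₀.isLt
      set e : Fin n := ⟨g, hgn⟩ with he
      have heval : e.val = g := rfl
      have hlt_of : ∀ {A : Finset (Fin n)}, A ∈ F → ∀ {a : Fin n}, a ∈ A → e ∉ A → e < a := by
        intro A hA a ha henA
        have h1 : g ≤ a.val := hshift.1 A hA a ha
        have h2 : e ≠ a := fun hh => henA (hh ▸ ha)
        rw [Fin.lt_def, heval]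
        rcases lt_or_eq_of_le h1 with h | h
        · exact h
        · exact absurd (Fin.ext (show e.val = a.val by rw [heval, h]) : e = a) h2
      have hstar_ex : ∃ A ∈ F, e ∈ A := by
        by_cases h : e ∈ A₀
        · exact ⟨A₀, hA₀, h⟩
        · exact ⟨_, hshift.2 A₀ hA₀ a₀ ha₀ e le_rfl (hlt_of hA₀ ha₀ h) h,
            Finset.mem_insert_self _ _⟩
      set star := F.filter (fun A => e ∈ A) with hstar_def
      set Fbar := F.filter (fun A => ¬ e ∈ A) with hFbar_def
      set Fe := star.image (fun A => A.erase e) with hFe_def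
      have hmemFe : ∀ B, B ∈ Fe ↔ (e ∉ B ∧ insert e B ∈ F) := by
        intro B
        constructor
        · intro hB
          rw [hFe_def, Finset.mem_image] at hB
          obtain ⟨A, hA, rfl⟩ := hB
          rw [hstar_def, Finset.mem_filter] at hA
          exact ⟨Finset.notMem_erase _ _, by rw [Finset.insert_erase hA.2]; exact hA.1⟩
        · rintro ⟨h1, h2⟩
          rw [hFe_def, Finset.mem_image]
          exact ⟨insert e B, Finset.mem_filter.2 ⟨h2, Finset.mem_insert_self _ _⟩,
            Finset.erase_insert h1⟩
      have hcard_star : #Fe = #star := by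
        rw [hFe_def]
        apply Finset.card_image_of_injOn
        intro A hA B hB hAB
        simp only [Finset.mem_coe, hstar_def, Finset.mem_filter] at hA hB
        simp only [] at hAB
        rw [← Finset.insert_erase hA.2, ← Finset.insert_erase hB.2, hAB]
      have hsplit : #star + #Fbar = #F :=
        Finset.card_filter_add_card_filter_not (p := fun A => e ∈ A)
      have huniFe : ∀ B ∈ Fe, #B = m + 1 := by
        intro B hB
        rw [hmemFe] at hB
        have h1 := huni _ hB.2
        rw [Finset.card_insert_of_notMem hB.1] at h1
        omega
      have huniFbar : ∀ A ∈ Fbar, #A = m + 2 := fun A hA =>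
        huni A (Finset.mem_filter.1 hA).1
      -- Fe is shifted above g+1
      have hshiftFe : ShiftedAbove (g + 1) Fe := by
        constructor
        · intro B hB a ha
          rw [hmemFe] at hB
          have h1 : g ≤ a.val := hshift.1 _ hB.2 a (Finset.mem_insert_of_mem ha)
          have h2 : a ≠ e := fun hh => hB.1 (hh ▸ ha)
          have h3 : a.val ≠ g := fun hh => h2 (Fin.ext (by rw [hh, heval]))
          omega
        · intro B hB a ha b hgb hba hbB
          rw [hmemFe] at hB
          have hbe : b ≠ e := fun hh => by rw [hh, heval] at hgb; omega
          have ha_ne_e : a ≠ e := fun hh => hB.1 (hh ▸ ha)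
          have h2 : b ∉ insert e B := by
            rw [Finset.mem_insert]
            push_neg
            exact ⟨hbe, hbB⟩
          have h3 := hshift.2 _ hB.2 a (Finset.mem_insert_of_mem ha) b (by omega) hba h2
          have h4 : (insert e B).erase a = insert e (B.erase a) :=
            Finset.erase_insert_of_ne (Ne.symm ha_ne_e)
          rw [h4, Finset.insert_comm] at h3
          rw [hmemFe]
          constructor
          · rw [Finset.mem_insert]
            push_neg
            exact ⟨Ne.symm hbe, fun hh => hB.1 (Finset.mem_of_mem_erase hh)⟩
          · exact h3
      have hshiftFbar : ShiftedAbove (g + 1) Fbar := by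
        constructor
        · intro A hA a ha
          rw [hFbar_def, Finset.mem_filter] at hA
          have h1 : g ≤ a.val := hshift.1 A hA.1 a ha
          have h2 : a ≠ e := fun hh => hA.2 (hh ▸ ha)
          have h3 : a.val ≠ g := fun hh => h2 (Fin.ext (by rw [hh, heval]))
          omega
        · intro A hA a ha b hgb hba hbA
          rw [hFbar_def, Finset.mem_filter] at hA
          have hbe : b ≠ e := fun hh => by rw [hh, heval] at hgb; omega
          have h3 := hshift.2 A hA.1 a ha b (by omega) hba hbA
          rw [hFbar_def, Finset.mem_filter]
          refine ⟨h3, ?_⟩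
          rw [Finset.mem_insert]
          push_neg
          exact ⟨Ne.symm hbe, fun hh => hA.2 (Finset.mem_of_mem_erase hh)⟩
      have hFe_le_F : #Fe ≤ #F := by
        rw [hcard_star]
        exact Finset.card_le_card (Finset.filter_subset _ _)
      -- key shadow decomposition
      have hkey : #Fe + #(∂ Fe) ≤ #(∂ F) := by
        have hS1 : Fe ⊆ ∂ F := by
          intro B hB
          rw [hmemFe] at hB
          have h1 := Finset.erase_mem_shadow hB.2 (Finset.mem_insert_self e B)
          rwa [Finset.erase_insert hB.1] at h1
        have hS2 : (∂ Fe).image (fun B => insert e B) ⊆ ∂ F := by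
          intro B' hB'
          rw [Finset.mem_image] at hB'
          obtain ⟨B, hB, rfl⟩ := hB'
          rw [Finset.mem_shadow_iff] at hB
          obtain ⟨C, hC, c, hc, rfl⟩ := hB
          rw [hmemFe] at hC
          have hce : c ≠ e := fun hh => hC.1 (hh ▸ hc)
          have h4 : insert e (C.erase c) = (insert e C).erase c :=
            (Finset.erase_insert_of_ne (Ne.symm hce)).symm
          rw [h4]
          exact Finset.erase_mem_shadow hC.2 (Finset.mem_insert_of_mem hc)
        have he_not_shadowFe : ∀ B ∈ ∂ Fe, e ∉ B := by
          intro B hB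
          obtain ⟨C, hC, hBC⟩ := Finset.exists_subset_of_mem_shadow hB
          rw [hmemFe] at hC
          exact fun hh => hC.1 (hBC hh)
        have hdisj : Disjoint Fe ((∂ Fe).image (fun B => insert e B)) := by
          rw [Finset.disjoint_left]
          intro B hB hB2
          rw [Finset.mem_image] at hB2
          obtain ⟨C, hC, hCB⟩ := hB2
          rw [hmemFe] at hB
          exact hB.1 (hCB ▸ Finset.mem_insert_self e C)
        have hcardim : #((∂ Fe).image (fun B => insert e B)) = #(∂ Fe) := by
          apply Finset.card_image_of_injOn
          intro B1 h1 B2 h2 hI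
          simp only [] at hI
          rw [← Finset.erase_insert (he_not_shadowFe B1 h1),
            ← Finset.erase_insert (he_not_shadowFe B2 h2), hI]
        calc #Fe + #(∂ Fe)
            = #(Fe ∪ (∂ Fe).image (fun B => insert e B)) := by
              rw [Finset.card_union_of_disjoint hdisj, hcardim]
          _ ≤ #(∂ F) := Finset.card_le_card (Finset.union_subset hS1 hS2)
      -- subclaim
      have hsub : (#Fe : ℝ) ≤ genChoose (x - 1) (m + 1) := by
        rcases Nat.eq_zero_or_pos m with hm0 | hmpos
        · subst hm0
          have hg1 : genChoose (x - 1) 1 = x - 1 := by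
            unfold genChoose
            simp
          rw [hg1]
          have hgx : genChoose x 1 = x := by
            unfold genChoose
            simp
          rw [hgx] at hsh
          by_cases hFe0 : Fe = ∅
          · rw [hFe0]
            simp only [Finset.card_empty, Nat.cast_zero]
            linarith
          · obtain ⟨B, hB⟩ := Finset.nonempty_iff_ne_empty.2 hFe0
            have h1 : 1 ≤ #(∂ Fe) := by
              have h2 := shadow_card_ge hB
              rw [huniFe B hB] at h2
              omega
            have h2 : ((#Fe : ℝ) + 1) ≤ #(∂ F) := by
              have : #Fe + 1 ≤ #(∂ F) := by omega
              exact_mod_cast this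
            linarith
        · obtain ⟨p, rfl⟩ : ∃ p, m = p + 1 := ⟨m - 1, by omega⟩
          by_contra hcon
          push_neg at hcon
          have hshFe : genChoose (x - 1) (p + 1) < (#(∂ Fe) : ℝ) := by
            by_contra hh
            push_neg at hh
            have h6 := ih p (g + 1) Fe (x - 1) (by omega) hshiftFe
              (fun B hB => huniFe B hB) (by push_cast at hxj ⊢; linarith) hh
            linarith
          have hcast : ((#Fe : ℝ) + (#(∂ Fe) : ℝ)) ≤ (#(∂ F) : ℝ) := by
            exact_mod_cast hkey
          have hp : genChoose x (p + 2) = genChoose (x - 1) (p + 2) + genChoose (x - 1) (p + 1) :=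
            gc_pascal x (p + 1)
          rw [hp] at hsh
          linarith
      -- measure for Fbar
      have hstar_pos : 0 < #star :=
        Finset.card_pos.2 (let ⟨A, hA, hAe⟩ := hstar_ex;
          ⟨A, Finset.mem_filter.2 ⟨hA, hAe⟩⟩)
      have hshadowFbar : ∂ Fbar ⊆ Fe := by
        intro B hB
        rw [Finset.mem_shadow_iff] at hB
        obtain ⟨A, hA, a, ha, rfl⟩ := hB
        rw [hFbar_def, Finset.mem_filter] at hA
        have hea : e < a := hlt_of hA.1 ha hA.2
        have h3 := hshift.2 A hA.1 a ha e le_rfl hea hA.2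
        rw [hmemFe]
        exact ⟨fun hh => hA.2 (Finset.mem_of_mem_erase hh), h3⟩
      have hFbar_le : (#Fbar : ℝ) ≤ genChoose (x - 1) (m + 2) := by
        apply ih m (g + 1) Fbar (x - 1) (by omega) hshiftFbar huniFbar
          (by linarith)
        calc (#(∂ Fbar) : ℝ) ≤ #Fe := by
              exact_mod_cast Finset.card_le_card hshadowFbar
          _ ≤ genChoose (x - 1) (m + 1) := hsub
      have hfin : genChoose x (m + 2) = genChoose (x - 1) (m + 2) + genChoose (x - 1) (m + 1) :=
        gc_pascal x (m + 1)
      have hFtot : (#F : ℝ) = (#star : ℝ) + (#Fbar : ℝ) := by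
        exact_mod_cast hsplit.symm
      have hstar_eq : (#star : ℝ) = (#Fe : ℝ) := by exact_mod_cast hcard_star.symm
      rw [hfin, hFtot, hstar_eq]
      linarith

lemma shadow_shifted {g : ℕ} {F : Finset (Finset (Fin n))} (h : ShiftedAbove g F) :
    ShiftedAbove g (∂ F) := by
  classical
  constructor
  · intro B hB a ha
    obtain ⟨A, hA, hBA⟩ := Finset.exists_subset_of_mem_shadow hB
    exact h.1 A hA a (hBA ha)
  · intro B hB a ha b hgb hba hbB
    rw [Finset.mem_shadow_iff_insert_mem] at hB
    obtain ⟨c, hc, hcB⟩ := hB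
    by_cases hbc : b = c
    · subst hbc
      rw [Finset.mem_shadow_iff_insert_mem]
      refine ⟨a, ?_, ?_⟩
      · rw [Finset.mem_insert]
        push_neg
        exact ⟨(ne_of_gt hba), Finset.notMem_erase a B⟩
      · have hcomm : insert a (insert b (B.erase a)) = insert b (insert a (B.erase a)) :=
          Finset.insert_comm _ _ _
        rw [hcomm, Finset.insert_erase ha]
        exact hcB
    · have haB : a ∈ insert c B := Finset.mem_insert_of_mem ha
      have hbI : b ∉ insert c B := by
        rw [Finset.mem_insert]
        push_neg
        exact ⟨hbc, hbB⟩
      have h3 := h.2 _ hcB a haB b hgb hba hbI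
      have hca : c ≠ a := fun hh => hc (hh ▸ ha)
      rw [Finset.erase_insert_of_ne hca, Finset.insert_comm] at h3
      rw [Finset.mem_shadow_iff_insert_mem]
      refine ⟨c, ?_, h3⟩
      rw [Finset.mem_insert]
      push_neg
      exact ⟨fun hh => hbc hh.symm, fun hh => hc (Finset.mem_of_mem_erase hh)⟩

lemma shadow_iter_shifted {g : ℕ} {F : Finset (Finset (Fin n))} (h : ShiftedAbove g F) :
    ∀ t, ShiftedAbove g (∂^[t] F) := by
  intro t
  induction t with
  | zero => exact h
  | succ t iht =>
    rw [Function.iterate_succ_apply']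
    exact shadow_shifted iht

lemma initseg_shifted {𝒞 : Finset (Finset (Fin n))} {k : ℕ}
    (h : Finset.Colex.IsInitSeg 𝒞 k) : ShiftedAbove 0 𝒞 := by
  constructor
  · intro A _ a _
    exact Nat.zero_le _
  · intro A hA a ha b _ hba hbA
    apply h.2 hA
    constructor
    · rw [Finset.Colex.toColex_lt_toColex_iff_exists_forall_lt]
      refine ⟨a, ha, ?_, ?_⟩
      · rw [Finset.mem_insert]
        push_neg
        exact ⟨ne_of_gt hba, Finset.notMem_erase a A⟩
      · intro u hu huA
        rcases Finset.mem_insert.1 hu with rfl | hu'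
        · exact hba
        · exact absurd (Finset.mem_of_mem_erase hu') huA
    · have hbe : b ∉ A.erase a := fun hh => hbA (Finset.mem_of_mem_erase hh)
      rw [Finset.card_insert_of_notMem hbe, Finset.card_erase_of_mem ha]
      have hk : #A = k := h.1 hA
      have hpos : 1 ≤ #A := Finset.card_pos.2 ⟨a, ha⟩
      omega

lemma exists_initSeg (k : ℕ) :
    ∀ m : ℕ, m ≤ #(Finset.powersetCard k (Finset.univ : Finset (Fin n))) →
    ∃ 𝒞 : Finset (Finset (Fin n)), #𝒞 = m ∧ Finset.Colex.IsInitSeg 𝒞 k := by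
  classical
  intro m
  induction m with
  | zero => exact fun _ => ⟨∅, by simp, by simp⟩
  | succ m ihm =>
    intro hm
    obtain ⟨𝒞, hc, hinit⟩ := ihm (by omega)
    have hsub : 𝒞 ⊆ Finset.powersetCard k (Finset.univ : Finset (Fin n)) := by
      intro A hA
      exact Finset.mem_powersetCard.2 ⟨Finset.subset_univ _, hinit.1 hA⟩
    have hne : ((Finset.powersetCard k (Finset.univ : Finset (Fin n))) \ 𝒞).Nonempty := by
      rw [Finset.sdiff_nonempty]
      intro hsub2
      have := Finset.card_le_card hsub2
      omega
    obtain ⟨A, hA, hmin⟩ := Finset.exists_min_image _ toColex hne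
    rw [Finset.mem_sdiff] at hA
    refine ⟨insert A 𝒞, ?_, ?_, ?_⟩
    · rw [Finset.card_insert_of_notMem hA.2, hc]
    · intro S hS
      rw [Finset.mem_coe, Finset.mem_insert] at hS
      rcases hS with rfl | hS'
      · exact (Finset.mem_powersetCard.1 hA.1).2
      · exact hinit.1 hS'
    · intro S T hS hT
      have hTpc : T ∈ Finset.powersetCard k (Finset.univ : Finset (Fin n)) :=
        Finset.mem_powersetCard.2 ⟨Finset.subset_univ _, hT.2⟩
      rcases Finset.mem_insert.1 hS with rfl | hS'
      · by_cases hT𝒞 : T ∈ 𝒞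
        · exact Finset.mem_insert_of_mem hT𝒞
        · exact absurd hT.1 (not_lt.2 (hmin T (Finset.mem_sdiff.2 ⟨hTpc, hT𝒞⟩)))
      · exact Finset.mem_insert_of_mem (hinit.2 hS' hT)

lemma climb {𝒞 : Finset (Finset (Fin n))} {k : ℕ} (hsh : ShiftedAbove 0 𝒞)
    (huni : ∀ A ∈ 𝒞, #A = k) {x : ℝ} (hx : (k : ℝ) - 1 < x) :
    ∀ d i : ℕ, 1 ≤ i → i + d = k → ((#(∂^[k - i] 𝒞) : ℝ)) ≤ genChoose x i →
    (#𝒞 : ℝ) ≤ genChoose x k := by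
  intro d
  induction d with
  | zero =>
    intro i hi hik h
    have hik' : i = k := by omega
    subst hik'
    rw [Nat.sub_self] at h
    exact h
  | succ d ihd =>
    intro i hi hik h
    apply ihd (i + 1) (by omega) (by omega)
    obtain ⟨q, rfl⟩ : ∃ q, i = q + 1 := ⟨i - 1, by omega⟩
    set G := ∂^[k - (q + 1 + 1)] 𝒞 with hG
    have hGsh : ShiftedAbove 0 G := shadow_iter_shifted hsh _
    have hGuni : ∀ B ∈ G, #B = q + 2 := by
      intro B hB
      have h2 := Set.Sized.shadow_iterate (𝒜 := 𝒞) (r := k)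
        (fun A hA => huni A hA) (k := k - (q + 1 + 1)) hB
      omega
    have hshadowG : ∂ G = ∂^[k - (q + 1)] 𝒞 := by
      rw [hG, show k - (q + 1) = (k - (q + 1 + 1)) + 1 by omega,
        Function.iterate_succ_apply']
    have hx' : ((q : ℝ) + 1) < x := by
      have h1 : (q + 1 : ℕ) + 1 ≤ k := by omega
      have h2 : ((q : ℝ) + 1) + 1 ≤ (k : ℝ) := by exact_mod_cast h1
      linarith
    have hsh' : ((#(∂ G) : ℝ)) ≤ genChoose x (q + 1) := by
      rw [hshadowG]
      exact h
    exact shifted_main ((q + 2) + #G) q 0 G x le_rfl hGsh hGuni hx' hsh'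

end KKAux


namespace KKAux

lemma iShadow_eq {n k i : ℕ} (hik : i ≤ k) (F : Finset (Finset (Fin n)))
    (hF : ∀ A ∈ F, A.card = k) : iShadow n i F = ∂^[k - i] F := by
  ext B
  rw [iShadow, Finset.mem_filter, Finset.mem_powersetCard,
    Finset.mem_shadow_iterate_iff_exists_sdiff]
  constructor
  · rintro ⟨⟨hBu, hBi⟩, A, hA, hBA⟩
    exact ⟨A, hA, hBA, by rw [Finset.card_sdiff_of_subset hBA, hF A hA, hBi]⟩
  · rintro ⟨A, hA, hBA, hsd⟩
    have h1 : #B ≤ #A := Finset.card_le_card hBA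
    rw [Finset.card_sdiff_of_subset hBA, hF A hA] at hsd
    rw [hF A hA] at h1
    exact ⟨⟨Finset.subset_univ B, by omega⟩, A, hA, hBA⟩

end KKAux


theorem stmt0 {n k i : ℕ} (hi : 1 ≤ i) (hik : i < k) (hkn : k ≤ n)
    (F : Finset (Finset (Fin n))) (hF : ∀ A ∈ F, A.card = k)
    (x : ℝ) (hx : (k : ℝ) - 1 < x)
    (hshadow : ((iShadow n i F).card : ℝ) ≤ genChoose x i) :
    (F.card : ℝ) ≤ genChoose x k := by
  have hsized : (F : Set (Finset (Fin n))).Sized k := fun A hA => hF A hA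
  have hFsub : F ⊆ Finset.powersetCard k Finset.univ := fun A hA =>
    Finset.mem_powersetCard.2 ⟨Finset.subset_univ _, hF A hA⟩
  obtain ⟨𝒞, hc𝒞, hinit⟩ := KKAux.exists_initSeg k F.card (Finset.card_le_card hFsub)
  have hkk := Finset.iterated_kk (k := k - i) hsized (le_of_eq hc𝒞) hinit
  have hish : iShadow n i F = ∂^[k - i] F := KKAux.iShadow_eq (le_of_lt hik) F hF
  have h1 : ((#(∂^[k - i] 𝒞) : ℝ)) ≤ genChoose x i := by
    have hkk' : #(∂^[k - i] 𝒞) ≤ #(∂^[k - i] F) := by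
      convert hkk using 4
    calc ((#(∂^[k - i] 𝒞) : ℝ)) ≤ (#(∂^[k - i] F) : ℝ) := by exact_mod_cast hkk'
      _ = ((iShadow n i F).card : ℝ) := by rw [hish]
      _ ≤ genChoose x i := hshadow
  have h𝒞sh : KKAux.ShiftedAbove 0 𝒞 := KKAux.initseg_shifted hinit
  have h𝒞uni : ∀ A ∈ 𝒞, #A = k := fun A hA => hinit.1 hA
  have h2 := KKAux.climb h𝒞sh h𝒞uni hx (k - i) i hi (by omega) h1
  rw [← hc𝒞]
  exact h2
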